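/- Let n ≥ 1, λ > 0, and A = 1, ε real with (2n+1)|ε| < 1, and define 𝔄(re^{iθ}) = r^λ e^{-inθ}(e^{i(n+1)θ} + ε e^{-i(n+1)θ}) for r ≥ 0, with 𝔄(0) = 0. Then 𝔄 : ℂ → ℂ is surjective. -/

import Mathlib

open Complex

/-- The leading term `𝔄` of the hodographic representation. -/
noncomputable def frakA (n : ℕ) (lam : ℝ) (A ε : ℂ) (ξ : ℂ) : ℂ :=
  if ξ = 0 then 0 else
    (A * (ξ / (‖ξ‖ : ℝ)) ^ (n + 1) +
        ε * (starRingEnd ℂ) A * ((starRingEnd ℂ) ξ / (‖ξ‖ : ℝ)) ^ (n + 1)) *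
      (ξ / (‖ξ‖ : ℝ)) ^ (-(n : ℤ)) * ((‖ξ‖ ^ lam : ℝ) : ℂ)


theorem frakA_surjective (n : ℕ) (lam : ℝ) (ε : ℝ)
    (hn : 1 ≤ n) (hlam : 0 < lam) (hε : (2 * (n : ℝ) + 1) * |ε| < 1) :
    Function.Surjective (frakA n lam 1 (ε : ℂ)) := by
  intro w
  by_cases hw : w = 0
  · exact ⟨0, by simp [frakA, hw]⟩
  have hn' : (1 : ℝ) ≤ 2 * (n : ℝ) + 1 := by
    have : (0 : ℝ) ≤ (n : ℝ) := Nat.cast_nonneg n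
    linarith
  have hε1 : |ε| < 1 := by nlinarith [abs_nonneg ε]
  -- the perturbation term
  set c : ℝ → ℂ := fun θ => (ε : ℂ) * Complex.exp ((-(2 * ((n : ℝ) + 1) * θ) : ℝ) * I) with hc_def
  have hre : ∀ θ : ℝ, 0 < (1 + c θ).re := by
    intro θ
    have h1 : (1 + c θ).re = 1 + ε * Real.cos (-(2 * ((n : ℝ) + 1) * θ)) := by
      rw [hc_def]
      simp only [Complex.add_re, Complex.one_re, Complex.re_ofReal_mul,
        Complex.exp_ofReal_mul_I_re]
    have h2 : |ε * Real.cos (-(2 * ((n : ℝ) + 1) * θ))| ≤ |ε| := by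
      rw [abs_mul]
      exact mul_le_of_le_one_right (abs_nonneg _)
        (Real.abs_cos_le_one _)
    rw [h1]
    linarith [neg_abs_le (ε * Real.cos (-(2 * ((n : ℝ) + 1) * θ)))]
  have hne : ∀ θ : ℝ, (1 : ℂ) + c θ ≠ 0 := by
    intro θ h
    have := hre θ
    rw [h] at this
    simp at this
  have habsne : ∀ θ : ℝ, ‖1 + c θ‖ ≠ 0 := fun θ =>
    norm_ne_zero_iff.mpr (hne θ)
  -- continuity of h
  have hccont : Continuous c := by
    apply continuous_const.mul
    exact Complex.continuous_exp.comp ((Complex.continuous_ofReal.comp (by continuity)).mul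
      continuous_const)
  have hh : Continuous fun θ : ℝ => θ + (1 + c θ).arg := by
    refine continuous_id.add ?_
    refine continuous_iff_continuousAt.mpr fun θ => ?_
    have h1 : ContinuousAt (fun θ : ℝ => (1 : ℂ) + c θ) θ :=
      (continuous_const.add hccont).continuousAt
    exact ContinuousAt.comp (g := Complex.arg) (f := fun θ : ℝ => (1 : ℂ) + c θ)
      (Complex.continuousAt_arg (Complex.mem_slitPlane_iff.mpr (Or.inl (hre θ)))) h1
  set h : ℝ → ℝ := fun θ => θ + (1 + c θ).arg with hh_def
  have hargε : ((1 : ℂ) + (ε : ℂ)).arg = 0 := by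
    have h1 : ((1 : ℂ) + (ε : ℂ)) = ((1 + ε : ℝ) : ℂ) := by push_cast; ring
    rw [h1]
    exact Complex.arg_ofReal_of_nonneg (by linarith [abs_lt.mp hε1])
  have h0 : h 0 = 0 := by
    simp only [hh_def, hc_def]
    norm_num [hargε]
  have h2pi : h (2 * Real.pi) = 2 * Real.pi := by
    have hexp1 : Complex.exp (((-(2 * ((n : ℝ) + 1) * (2 * Real.pi)) : ℝ) : ℂ) * I) = 1 := by
      have h2 : ((-(2 * ((n : ℝ) + 1) * (2 * Real.pi)) : ℝ) : ℂ) * I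
          = ((-(2 * ((n : ℕ) + 1)) : ℤ) : ℂ) * (2 * (Real.pi : ℂ) * I) := by
        push_cast; ring
      rw [h2, Complex.exp_int_mul_two_pi_mul_I]
    simp only [hh_def, hc_def]
    rw [hexp1, mul_one, hargε]
    ring
  -- pick the target angle φ
  obtain ⟨φ, hφ0, hφ2, hφexp⟩ :
      ∃ φ : ℝ, 0 ≤ φ ∧ φ ≤ 2 * Real.pi ∧ Complex.exp ((φ : ℝ) * I) = w / ‖w‖ := by
    have habsw : (‖w‖ : ℝ) ≠ 0 := norm_ne_zero_iff.mpr hw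
    have harg : Complex.exp ((w.arg : ℝ) * I) = w / ‖w‖ := by
      rw [eq_div_iff (by exact_mod_cast habsw), mul_comm]
      exact Complex.norm_mul_exp_arg_mul_I w
    have hpi := Real.pi_pos
    rcases le_or_gt 0 w.arg with hwa | hwa
    · exact ⟨w.arg, hwa, by linarith [Complex.arg_le_pi w], harg⟩
    · refine ⟨w.arg + 2 * Real.pi, by linarith [Complex.neg_pi_lt_arg w], by linarith, ?_⟩
      have h2 : ((w.arg + 2 * Real.pi : ℝ) : ℂ) * I
          = (w.arg : ℝ) * I + ((1 : ℤ) : ℂ) * (2 * (Real.pi : ℂ) * I) := by push_cast; ring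
      rw [h2, Complex.exp_add, Complex.exp_int_mul_two_pi_mul_I, mul_one, harg]
  -- IVT
  obtain ⟨θ, -, hθ⟩ : ∃ θ ∈ Set.Icc (0 : ℝ) (2 * Real.pi), h θ = φ := by
    have := intermediate_value_Icc (by positivity : (0:ℝ) ≤ 2 * Real.pi) hh.continuousOn
    rw [h0, h2pi] at this
    exact this ⟨hφ0, hφ2⟩
  -- build the preimage
  set r : ℝ := (‖w‖ / ‖1 + c θ‖) ^ (1 / lam) with hr_def
  have hr : 0 < r := by
    apply Real.rpow_pos_of_pos
    exact div_pos (norm_pos_iff.mpr hw) ((norm_pos_iff.mpr (hne θ)))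
  have hrlam : (r : ℝ) ^ lam = ‖w‖ / ‖1 + c θ‖ := by
    have hx : (0:ℝ) ≤ ‖w‖ / ‖1 + c θ‖ := by positivity
    rw [hr_def, ← Real.rpow_mul hx, one_div, inv_mul_cancel₀ (ne_of_gt hlam), Real.rpow_one]
  set ξ : ℂ := (r : ℝ) * Complex.exp ((θ : ℝ) * I) with hξ_def
  have habsξ : ‖ξ‖ = r := by
    simp [hξ_def, map_mul, Complex.norm_exp_ofReal_mul_I, Complex.norm_real, abs_of_pos hr]
  have hξ0 : ξ ≠ 0 := by
    simp [hξ_def, Complex.exp_ne_zero, ne_of_gt hr]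
  have hrC : ((r : ℝ) : ℂ) ≠ 0 := by exact_mod_cast ne_of_gt hr
  have hdiv : ξ / ((‖ξ‖ : ℝ) : ℂ) = Complex.exp ((θ : ℝ) * I) := by
    rw [habsξ, hξ_def]
    field_simp
  have hconj : (starRingEnd ℂ) ξ / ((‖ξ‖ : ℝ) : ℂ)
      = Complex.exp (-((θ : ℝ) : ℂ) * I) := by
    rw [habsξ, hξ_def, map_mul, ← Complex.exp_conj]
    have h2 : (starRingEnd ℂ) (((θ : ℝ) : ℂ) * I) = -((θ : ℝ) : ℂ) * I := by
      rw [map_mul, Complex.conj_I, Complex.conj_ofReal]; ring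
    rw [h2, Complex.conj_ofReal]
    field_simp
  refine ⟨ξ, ?_⟩
  rw [frakA, if_neg hξ0]
  rw [hdiv, hconj]
  simp only [one_mul, map_one, mul_one]
  -- combine exponentials
  have key : (Complex.exp (((θ : ℝ) : ℂ) * I) ^ (n + 1) +
      (ε : ℂ) * Complex.exp (-((θ : ℝ) : ℂ) * I) ^ (n + 1)) *
      Complex.exp (((θ : ℝ) : ℂ) * I) ^ (-(n : ℤ)) =
      Complex.exp (((θ : ℝ) : ℂ) * I) * (1 + c θ) := by
    rw [← Complex.exp_int_mul, ← Complex.exp_nat_mul, ← Complex.exp_nat_mul]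
    rw [add_mul, ← Complex.exp_add, mul_assoc, ← Complex.exp_add]
    have e1 : ((n + 1 : ℕ) : ℂ) * (((θ : ℝ) : ℂ) * I) + ((-(n : ℤ) : ℤ) : ℂ) * (((θ : ℝ) : ℂ) * I)
        = ((θ : ℝ) : ℂ) * I := by push_cast; ring
    have e2 : ((n + 1 : ℕ) : ℂ) * (-((θ : ℝ) : ℂ) * I) + ((-(n : ℤ) : ℤ) : ℂ) * (((θ : ℝ) : ℂ) * I)
        = ((θ : ℝ) : ℂ) * I + ((-(2 * ((n : ℝ) + 1) * θ) : ℝ) : ℂ) * I := by push_cast; ring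
    rw [e1, e2, Complex.exp_add, hc_def]
    ring
  rw [key]
  have habs1c : ((‖1 + c θ‖ : ℝ) : ℂ) ≠ 0 := by
    exact_mod_cast habsne θ
  have habswC : ((‖w‖ : ℝ) : ℂ) ≠ 0 := by
    exact_mod_cast norm_ne_zero_iff.mpr hw
  have harg1c : Complex.exp ((((1 + c θ).arg : ℝ) : ℂ) * I)
      = (1 + c θ) / ((‖1 + c θ‖ : ℝ) : ℂ) := by
    rw [eq_div_iff habs1c, mul_comm]
    exact Complex.norm_mul_exp_arg_mul_I _
  have hfinal : Complex.exp (((θ : ℝ) : ℂ) * I) * (1 + c θ) / ((‖1 + c θ‖ : ℝ) : ℂ)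
      = w / ((‖w‖ : ℝ) : ℂ) := by
    rw [← hφexp, ← hθ, hh_def]
    simp only
    push_cast
    rw [add_mul, Complex.exp_add, harg1c]
    ring
  rw [habsξ, hrlam, Complex.ofReal_div]
  rw [div_eq_div_iff habs1c habswC] at hfinal
  field_simp
  linear_combination hfinal
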